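/- Let d, d_1, ..., d_r be positive integers with each d_i | d. Then the constant c := (1/d^r) · Π_{i=1}^{r} Σ_{z | d} μ(z/gcd(z, d_i))^2 φ(z) / φ(z/gcd(z, d_i))^2 satisfies 1/d^r ≤ c ≤ 1. -/

import Mathlib

open ArithmeticFunction
open scoped ArithmeticFunction.Moebius

/-- For positive integers `d_1, …, d_r` dividing `d`, the constant
`c = (1/d^r) ∏_{i=1}^{r} ∑_{z ∣ d} μ(z/gcd(z,d_i))² φ(z) / φ(z/gcd(z,d_i))²`
satisfies `1/d^r ≤ c ≤ 1`. -/
theorem stmt13 (r d : ℕ) (hd : 0 < d) (di : Fin r → ℕ)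
    (hdi : ∀ i, 0 < di i) (hdvd : ∀ i, di i ∣ d) :
    1 / (d : ℚ) ^ r ≤ (1 / (d : ℚ) ^ r) * ∏ i : Fin r, ∑ z ∈ d.divisors,
        ((μ (z / Nat.gcd z (di i)) : ℚ) ^ 2 * (Nat.totient z : ℚ)
          / (Nat.totient (z / Nat.gcd z (di i)) : ℚ) ^ 2)
    ∧ (1 / (d : ℚ) ^ r) * ∏ i : Fin r, ∑ z ∈ d.divisors,
        ((μ (z / Nat.gcd z (di i)) : ℚ) ^ 2 * (Nat.totient z : ℚ)
          / (Nat.totient (z / Nat.gcd z (di i)) : ℚ) ^ 2)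
      ≤ 1 := by
  set f : Fin r → ℚ := fun i => ∑ z ∈ d.divisors,
        ((μ (z / Nat.gcd z (di i)) : ℚ) ^ 2 * (Nat.totient z : ℚ)
          / (Nat.totient (z / Nat.gcd z (di i)) : ℚ) ^ 2) with hf
  have hnonneg : ∀ i (z : ℕ),
      0 ≤ ((μ (z / Nat.gcd z (di i)) : ℚ) ^ 2 * (Nat.totient z : ℚ)
          / (Nat.totient (z / Nat.gcd z (di i)) : ℚ) ^ 2) := by
    intro i z
    positivity
  have hone : ∀ i, (1:ℚ) ≤ f i := by
    intro i
    have h1 : 1 ∈ d.divisors := Nat.one_mem_divisors.2 hd.ne'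
    have := Finset.single_le_sum (f := fun z =>
        ((μ (z / Nat.gcd z (di i)) : ℚ) ^ 2 * (Nat.totient z : ℚ)
          / (Nat.totient (z / Nat.gcd z (di i)) : ℚ) ^ 2))
        (fun z _ => hnonneg i z) h1
    simpa using this
  have hle : ∀ i, f i ≤ (d:ℚ) := by
    intro i
    have hstep : ∀ z ∈ d.divisors,
        ((μ (z / Nat.gcd z (di i)) : ℚ) ^ 2 * (Nat.totient z : ℚ)
          / (Nat.totient (z / Nat.gcd z (di i)) : ℚ) ^ 2)
        ≤ (Nat.totient z : ℚ) := by
      intro z hz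
      have hz0 : 0 < z := Nat.pos_of_mem_divisors hz
      set w := z / Nat.gcd z (di i) with hw
      have hw0 : 0 < w := Nat.div_pos (Nat.le_of_dvd hz0 (Nat.gcd_dvd_left _ _))
        (Nat.gcd_pos_of_pos_left _ hz0)
      have hphi : 1 ≤ (Nat.totient w : ℚ) := by
        exact_mod_cast Nat.one_le_iff_ne_zero.2 (Nat.totient_pos.2 hw0).ne'
      have hmu : ((μ w : ℚ))^2 ≤ 1 := by
        have : |μ w| ≤ 1 := abs_moebius_le_one
        have h2 : (μ w)^2 ≤ 1 := by nlinarith [abs_nonneg (μ w), sq_abs (μ w)]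
        calc ((μ w : ℚ))^2 = ((μ w)^2 : ℤ) := by push_cast; ring
          _ ≤ ((1:ℤ):ℚ) := by exact_mod_cast h2
          _ = 1 := by norm_num
      have hphi2 : 1 ≤ (Nat.totient w : ℚ)^2 := by nlinarith
      calc ((μ w : ℚ) ^ 2 * (Nat.totient z : ℚ) / (Nat.totient w : ℚ) ^ 2)
          ≤ (μ w : ℚ) ^ 2 * (Nat.totient z : ℚ) :=
            div_le_self (by positivity) hphi2
        _ ≤ 1 * (Nat.totient z : ℚ) :=
            mul_le_mul_of_nonneg_right hmu (by positivity)
        _ = (Nat.totient z : ℚ) := by ring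
    calc f i ≤ ∑ z ∈ d.divisors, (Nat.totient z : ℚ) := Finset.sum_le_sum hstep
      _ = ((∑ z ∈ d.divisors, Nat.totient z : ℕ) : ℚ) := by push_cast; ring
      _ = (d:ℚ) := by rw [Nat.sum_totient]
  have hd0 : (0:ℚ) < 1 / (d:ℚ)^r := by positivity
  constructor
  · have h1 : (1:ℚ) ≤ ∏ i, f i := by
      have := Finset.prod_le_prod (s := Finset.univ) (f := fun _ : Fin r => (1:ℚ)) (g := f)
        (fun i _ => zero_le_one) (fun i _ => hone i)
      simpa using this
    nlinarith [h1, hd0]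
  · have hprod : ∏ i, f i ≤ ∏ _i : Fin r, (d:ℚ) :=
      Finset.prod_le_prod (fun i _ => le_trans zero_le_one (hone i)) (fun i _ => hle i)
    have : ∏ i, f i ≤ (d:ℚ)^r := by simpa using hprod
    rw [div_mul_eq_mul_div, one_mul, div_le_one (by positivity)]
    linarith
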